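/- Let ℓ : ℝ^C → ℝ be convex, non-negative and differentiable, let x ∈ ℝ^d be nonzero, and let α > 0. Then the infimum of ℓ(J x) over all matrices J ∈ ℝ^{C×d} with ‖J‖_F² ≤ α is attained at a matrix of the form J* = c xᵀ for some c ∈ ℝ^C with ‖c‖₂ ‖x‖₂ ≤ √α; i.e., there is a normal-aligned (rank at most one, with rows proportional to x) minimizer of the norm-constrained objective. -/

import Mathlib

/-- Euclidean norm of a vector in `ℝ^d`. -/
noncomputable def norm2 {d : ℕ} (v : Fin d → ℝ) : ℝ := Real.sqrt (∑ j, (v j) ^ 2)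

/-- Squared Frobenius norm of a matrix. -/
def frobSq {C d : ℕ} (J : Matrix (Fin C) (Fin d) ℝ) : ℝ := ∑ i, ∑ j, (J i j) ^ 2

/-- for a convex, non-negative, differentiable loss `ℓ`, nonzero `x`, and `α > 0`,
the infimum of `ℓ(J x)` over matrices `J` with `‖J‖_F² ≤ α` is attained at a normal-aligned
matrix `J* = c xᵀ` with `‖c‖₂ ‖x‖₂ ≤ √α`. -/
theorem stmt1 {C d : ℕ} (ℓ : (Fin C → ℝ) → ℝ)
    (hconv : ConvexOn ℝ Set.univ ℓ) (hnonneg : ∀ z, 0 ≤ ℓ z)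
    (hdiff : Differentiable ℝ ℓ)
    (x : Fin d → ℝ) (hx : x ≠ 0) (α : ℝ) (hα : 0 < α) :
    ∃ c : Fin C → ℝ,
      norm2 c * norm2 x ≤ Real.sqrt α ∧
      frobSq (Matrix.vecMulVec c x) ≤ α ∧
      ∀ J : Matrix (Fin C) (Fin d) ℝ, frobSq J ≤ α →
        ℓ ((Matrix.vecMulVec c x).mulVec x) ≤ ℓ (J.mulVec x) := by
  set X : ℝ := ∑ j, (x j) ^ 2 with hXdef
  have hX : 0 < X := by
    have : ∃ j, x j ≠ 0 := by
      by_contra h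
      push_neg at h
      exact hx (funext h)
    obtain ⟨j, hj⟩ := this
    exact Finset.sum_pos' (fun i _ => sq_nonneg _)
      ⟨j, Finset.mem_univ j, by positivity⟩
  -- the compact set of achievable outputs
  set S : Set (Fin C → ℝ) := {z | ∑ i, (z i) ^ 2 ≤ α * X} with hSdef
  have hsum_cont : Continuous (fun z : Fin C → ℝ => ∑ i, (z i) ^ 2) := by
    continuity
  have hSclosed : IsClosed S := isClosed_le hsum_cont continuous_const
  have hSbdd : Bornology.IsBounded S := by
    rw [Metric.isBounded_iff_subset_closedBall 0]
    refine ⟨Real.sqrt (α * X), fun z hz => ?_⟩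
    simp only [Metric.mem_closedBall, dist_zero_right]
    rw [pi_norm_le_iff_of_nonneg (Real.sqrt_nonneg _)]
    intro i
    rw [Real.norm_eq_abs, ← Real.sqrt_sq_eq_abs]
    apply Real.sqrt_le_sqrt
    calc (z i) ^ 2 ≤ ∑ i, (z i) ^ 2 :=
          Finset.single_le_sum (fun i _ => sq_nonneg (z i)) (Finset.mem_univ i)
      _ ≤ α * X := hz
  have hScompact : IsCompact S := Metric.isCompact_of_isClosed_isBounded hSclosed hSbdd
  have hSne : S.Nonempty := ⟨0, by simp [hSdef]; positivity⟩
  obtain ⟨z₀, hz₀S, hz₀min⟩ :=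
    hScompact.exists_isMinOn hSne (hdiff.continuous.continuousOn)
  have hz₀ : ∑ i, (z₀ i) ^ 2 ≤ α * X := hz₀S
  have hfrob : frobSq (Matrix.vecMulVec (X⁻¹ • z₀) x) = X⁻¹ * ∑ i, (z₀ i) ^ 2 := by
    have h1 : ∀ i : Fin C, ∑ j, (X⁻¹ * z₀ i * x j) ^ 2 = X⁻¹ ^ 2 * z₀ i ^ 2 * X := by
      intro i
      simp only [mul_pow, mul_assoc, ← Finset.mul_sum]
      rw [← hXdef]
    simp only [frobSq, Matrix.vecMulVec_apply, Pi.smul_apply, smul_eq_mul]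
    rw [Finset.sum_congr rfl (fun i _ => h1 i), ← Finset.sum_mul, ← Finset.mul_sum]
    field_simp
  -- define c
  refine ⟨X⁻¹ • z₀, ?_, ?_, ?_⟩
  · -- norm2 bound
    have h1 : norm2 (X⁻¹ • z₀) * norm2 x
        = Real.sqrt (frobSq (Matrix.vecMulVec (X⁻¹ • z₀) x)) := by
      rw [norm2, norm2, ← Real.sqrt_mul (by positivity), hfrob]
      congr 1
      simp only [Pi.smul_apply, smul_eq_mul, mul_pow]
      rw [← Finset.mul_sum, ← hXdef]
      field_simp
    rw [h1]
    apply Real.sqrt_le_sqrt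
    rw [hfrob, inv_mul_le_iff₀ hX]
    linarith
  · -- frobSq bound
    rw [hfrob, inv_mul_le_iff₀ hX]
    linarith
  · -- minimality
    intro J hJ
    have hmv : (Matrix.vecMulVec (X⁻¹ • z₀) x).mulVec x = z₀ := by
      funext i
      simp only [Matrix.mulVec, Matrix.vecMulVec_apply, dotProduct,
        Pi.smul_apply, smul_eq_mul]
      have h2 : ∑ j, X⁻¹ * z₀ i * x j * x j = X⁻¹ * z₀ i * ∑ j, (x j) ^ 2 := by
        rw [Finset.mul_sum]; apply Finset.sum_congr rfl; intro j _; ring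
      rw [h2, ← hXdef]
      field_simp
    rw [hmv]
    apply hz₀min
    show ∑ i, (J.mulVec x i) ^ 2 ≤ α * X
    have hcs : ∀ i, (J.mulVec x i) ^ 2 ≤ (∑ j, (J i j) ^ 2) * X := by
      intro i
      simpa [Matrix.mulVec, dotProduct] using
        Finset.sum_mul_sq_le_sq_mul_sq Finset.univ (fun j => J i j) x
    calc ∑ i, (J.mulVec x i) ^ 2 ≤ ∑ i, (∑ j, (J i j) ^ 2) * X :=
          Finset.sum_le_sum (fun i _ => hcs i)
      _ = frobSq J * X := by rw [frobSq, ← Finset.sum_mul]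
      _ ≤ α * X := by nlinarith [hX]
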